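/- Let a > 0, let v ∈ C¹[0,a] with v(0) = 0 and v'(0) ≠ 0, and let F be C¹ on an open set containing the graph {(φ(r), r) : 0 ≤ r ≤ a} with F(φ(0), 0) = 0. Suppose φ ∈ C[0,a] ∩ C¹(0,a] solves v(r)·φ'(r) = F(φ(r), r) on (0,a], and that γ := F_φ(φ(0),0)/v'(0) < 0. Then φ is differentiable at 0 with derivative F_r(φ(0),0)/(v'(0) - F_φ(φ(0),0)), and φ' is continuous at 0 (so φ ∈ C¹[0,a]). -/

import Mathlib

open Real Set Filter

lemma core (γ c r1 : ℝ) (hγ : γ < 0) (hc : 0 < c) (hr1 : 0 < r1)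
    (w w' : ℝ → ℝ)
    (hw0 : ∀ r ∈ Set.Ioc (0:ℝ) r1, 0 ≤ w r)
    (hd : ∀ r ∈ Set.Ioc (0:ℝ) r1, HasDerivAt w (w' r) r)
    (hlim : Tendsto w (nhdsWithin 0 (Set.Ioi 0)) (nhds 0))
    (hreg : ∀ r ∈ Set.Ioc (0:ℝ) r1, c^2 * r^2 ≤ w r → w' r ≤ γ * w r / r) :
    ∀ r ∈ Set.Ioc (0:ℝ) r1, w r ≤ c^2 * r^2 := by
  by_contra hcon
  push_neg at hcon
  obtain ⟨s0, hs0mem, hws0⟩ := hcon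
  obtain ⟨hs0pos, hs0le⟩ := hs0mem
  set q : ℝ → ℝ := fun s => w s * s ^ (-γ) with hqdef
  have hs0w : (0:ℝ) < w s0 := lt_of_le_of_lt (by positivity) hws0
  -- Claim 1 : q s0 ≤ q s for s ∈ Ioc 0 s0
  have claim1 : ∀ s ∈ Set.Ioc (0:ℝ) s0, q s0 ≤ q s := by
    rintro s ⟨hspos, hsle⟩
    rcases eq_or_lt_of_le hsle with rfl|hslt
    · exact le_refl _
    by_contra hqs
    push_neg at hqs   -- q s < q s0
    -- threshold
    set β : ℝ := max (q s) (c^2 * s0^2 * s0 ^ (-γ)) with hβdef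
    have hβlt : β < q s0 := by
      apply max_lt hqs
      simp only [hqdef]
      exact mul_lt_mul_of_pos_right hws0 (rpow_pos_of_pos hs0pos _)
    set c'' : ℝ := (β + q s0) / 2 with hc''def
    have hβc'' : β < c'' := by simp only [hc''def]; linarith
    have hc''q : c'' < q s0 := by simp only [hc''def]; linarith
    -- continuity of q on Icc s s0
    have hsub : Set.Icc s s0 ⊆ Set.Ioc (0:ℝ) r1 := fun x hx =>
      ⟨lt_of_lt_of_le hspos hx.1, le_trans hx.2 hs0le⟩
    have hqcont : ∀ x ∈ Set.Icc s s0, ContinuousAt q x := by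
      intro x hx
      have hx0 : x ≠ 0 := (lt_of_lt_of_le hspos hx.1).ne'
      exact ((hd x (hsub hx)).continuousAt).mul
        (Real.continuousAt_rpow_const x _ (Or.inl hx0))
    -- the set T and its sup
    set T : Set ℝ := {x | x ∈ Set.Icc s s0 ∧ q x ≤ c''} with hTdef
    have hsT : s ∈ T := ⟨⟨le_refl _, hslt.le⟩, le_of_lt (lt_of_le_of_lt (le_max_left _ _) hβc'')⟩
    have hTne : T.Nonempty := ⟨s, hsT⟩
    have hTbdd : BddAbove T := ⟨s0, fun x hx => hx.1.2⟩
    set t : ℝ := sSup T with htdef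
    have htmem : t ∈ Set.Icc s s0 :=
      ⟨le_csSup hTbdd hsT, csSup_le hTne fun x hx => hx.1.2⟩
    have hqt : q t ≤ c'' := by
      have hclos : t ∈ closure T := csSup_mem_closure hTne hTbdd
      haveI : (nhdsWithin t T).NeBot := mem_closure_iff_nhdsWithin_neBot.mp hclos
      have ht2 : Tendsto q (nhdsWithin t T) (nhds (q t)) :=
        ((hqcont t htmem).continuousWithinAt).tendsto
      exact le_of_tendsto ht2 (eventually_nhdsWithin_of_forall fun x hx => hx.2)
    have hts0 : t < s0 := by
      rcases lt_or_eq_of_le htmem.2 with h|h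
      · exact h
      · exact absurd (h ▸ hqt) (not_le.mpr hc''q)
    have hgt : ∀ x ∈ Set.Ioc t s0, c'' < q x := by
      rintro x ⟨hx1, hx2⟩
      by_contra hle
      push_neg at hle
      have : x ∈ T := ⟨⟨le_trans htmem.1 hx1.le, hx2⟩, hle⟩
      exact absurd (le_csSup hTbdd this) (not_le.mpr hx1)
    -- MVT
    set q' : ℝ → ℝ := fun x => w' x * x ^ (-γ) + w x * (-γ * x ^ (-γ - 1)) with hq'def
    have hderivq : ∀ x ∈ Set.Ioo t s0, HasDerivAt q (q' x) x := by
      intro x hx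
      have hx' : x ∈ Set.Ioc (0:ℝ) r1 := hsub ⟨le_trans htmem.1 hx.1.le, hx.2.le⟩
      exact (hd x hx').mul
        (Real.hasDerivAt_rpow_const (Or.inl hx'.1.ne'))
    have hcont : ContinuousOn q (Set.Icc t s0) := fun x hx =>
      ((hqcont x ⟨le_trans htmem.1 hx.1, hx.2⟩).continuousWithinAt)
    obtain ⟨ξ, hξ, hξeq⟩ := exists_hasDerivAt_eq_slope q q' hts0 hcont hderivq
    have hξpos : (0:ℝ) < ξ := lt_of_lt_of_le hspos (le_trans htmem.1 hξ.1.le)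
    have hξIoc : ξ ∈ Set.Ioc (0:ℝ) r1 := ⟨hξpos, le_trans hξ.2.le hs0le⟩
    -- region condition at ξ
    have hqξ : c'' < q ξ := hgt ξ ⟨hξ.1, hξ.2.le⟩
    have hregion : c^2 * ξ^2 ≤ w ξ := by
      have h1 : c^2 * ξ^2 * ξ ^ (-γ) ≤ c^2 * s0^2 * s0 ^ (-γ) := by
        have e1 : c^2 * ξ^2 * ξ ^ (-γ) = c^2 * ξ ^ ((2:ℝ) - γ) := by
          rw [Real.rpow_sub hξpos, Real.rpow_neg hξpos.le, Real.rpow_two]; ring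
        have e2 : c^2 * s0^2 * s0 ^ (-γ) = c^2 * s0 ^ ((2:ℝ) - γ) := by
          rw [Real.rpow_sub hs0pos, Real.rpow_neg hs0pos.le, Real.rpow_two]; ring
        rw [e1, e2]
        exact mul_le_mul_of_nonneg_left
          (Real.rpow_le_rpow hξpos.le hξ.2.le (by linarith)) (by positivity)
      have h2 : c^2 * ξ^2 * ξ ^ (-γ) < q ξ := by
        calc c^2 * ξ^2 * ξ ^ (-γ) ≤ c^2 * s0^2 * s0 ^ (-γ) := h1
          _ ≤ β := le_max_right _ _
          _ < c'' := hβc''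
          _ < q ξ := hqξ
      have hpos : (0:ℝ) < ξ ^ (-γ) := rpow_pos_of_pos hξpos _
      have := (mul_lt_mul_iff_of_pos_right hpos).mp h2
      linarith
    have hw'ξ : w' ξ ≤ γ * w ξ / ξ := hreg ξ hξIoc hregion
    -- q' ξ ≤ 0
    have hq'le : q' ξ ≤ 0 := by
      have e : ξ ^ (-γ - 1) = ξ ^ (-γ) / ξ := by
        rw [Real.rpow_sub hξpos, Real.rpow_one]
      have hpos : (0:ℝ) < ξ ^ (-γ) := rpow_pos_of_pos hξpos _
      simp only [hq'def, e]
      have h1 : w' ξ * ξ ^ (-γ) ≤ (γ * w ξ / ξ) * ξ ^ (-γ) :=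
        mul_le_mul_of_nonneg_right hw'ξ hpos.le
      have : (γ * w ξ / ξ) * ξ ^ (-γ) + w ξ * (-γ * (ξ ^ (-γ) / ξ)) = 0 := by
        field_simp
        ring
      linarith
    -- but MVT gives q' ξ > 0
    have : 0 < q' ξ := by
      rw [hξeq]
      apply div_pos _ (by linarith)
      have := hqt
      linarith [hc''q]
    linarith

  -- now derive contradiction with hlim
  have hwlow : ∀ s ∈ Set.Ioc (0:ℝ) s0, w s0 ≤ w s := by
    rintro s ⟨hspos, hsle⟩
    have h1 : w s0 * s0 ^ (-γ) ≤ w s * s ^ (-γ) := claim1 s ⟨hspos, hsle⟩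
    have h2 : w s * s ^ (-γ) ≤ w s * s0 ^ (-γ) := by
      apply mul_le_mul_of_nonneg_left _ (hw0 s ⟨hspos, le_trans hsle hs0le⟩)
      exact Real.rpow_le_rpow hspos.le hsle (by linarith)
    have hpos : (0:ℝ) < s0 ^ (-γ) := rpow_pos_of_pos hs0pos _
    have := le_trans h1 h2
    exact (mul_le_mul_iff_of_pos_right hpos).mp this
  have hev : ∀ᶠ s in nhdsWithin 0 (Set.Ioi 0), w s < w s0 :=
    hlim.eventually_lt_const hs0w
  have hev2 : ∀ᶠ s in nhdsWithin 0 (Set.Ioi 0), s ∈ Set.Ioc (0:ℝ) s0 :=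
    Ioc_mem_nhdsGT_of_mem ⟨le_refl _, hs0pos⟩
  obtain ⟨s, hs1, hs2⟩ := (hev.and hev2).exists
  exact absurd (hwlow s hs2) (not_le.mpr hs1)
lemma region_est (P Fx L γ0 c ε1 ε2 r gr Er vr x : ℝ)
    (hγ0def : γ0 = Fx / P) (hγ0 : γ0 < 0)
    (habsP : 0 < |P|)
    (hc : 0 < c) (hrpos : 0 < r)
    (hε1 : 0 < ε1) (hε2 : 0 < ε2)
    (hK1 : ε1 * (|P| * (1 + (|L| + 1) / c) + 1) ≤ (-γ0) * |P| ^ 2 / 8)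
    (hK2 : ε2 * (|Fx| + |L| * |P| / c + 1) ≤ (-γ0) * |P| ^ 2 / 8)
    (hE1 : |Er| ≤ ε1 * (|gr + L * r| + r))
    (hv2 : |vr - P * r| ≤ ε2 * r)
    (hvl : |P| / 2 * r ≤ |vr|) (hvne : vr ≠ 0)
    (hS : vr * x = Fx * gr + L * (P * r - vr) + Er)
    (hgr : c * r ≤ |gr|) :
    2 * gr * x ≤ γ0 * gr ^ 2 / r := by
  have hPne : P ≠ 0 := by
    intro h; rw [h] at habsP; simp at habsP
  have hγ0' : (0:ℝ) < -γ0 := neg_pos.mpr hγ0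
  have h1 : x = (Fx * gr + L * (P * r - vr) + Er) / vr := by
    rw [eq_div_iff hvne]
    linear_combination hS
  set S : ℝ := Fx * gr + L * (P * r - vr) + Er with hSdef
  have hkey : 2 * gr * x - 2 * γ0 * gr ^ 2 / r
      = (2 * gr * (S * (P * r) - Fx * gr * vr)) / (vr * (P * r)) := by
    rw [h1, hγ0def]
    field_simp
  have hPr : |P * r| = |P| * r := by rw [abs_mul, abs_of_pos hrpos]
  have hPrv : |P * r - vr| ≤ ε2 * r := by rw [abs_sub_comm]; exact hv2
  have hEb2 : |Er| ≤ ε1 * (|gr| + (|L| + 1) * r) := by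
    have h2 : |gr + L * r| ≤ |gr| + |L| * r := by
      calc |gr + L * r| ≤ |gr| + |L * r| := abs_add_le _ _
        _ = |gr| + |L| * r := by rw [abs_mul, abs_of_pos hrpos]
    calc |Er| ≤ ε1 * (|gr + L * r| + r) := hE1
      _ ≤ ε1 * (|gr| + (|L| + 1) * r) := by
          apply mul_le_mul_of_nonneg_left _ hε1.le; linarith
  set N' : ℝ := |Fx| * |gr| * (ε2 * r) + |L| * (ε2 * r) * (|P| * r)
    + |Er| * (|P| * r) with hN'def
  have hNum : |2 * gr * (S * (P * r) - Fx * gr * vr)| ≤ 2 * |gr| * N' := by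
    have habs2 : |2 * gr * (S * (P * r) - Fx * gr * vr)|
        = 2 * |gr| * |S * (P * r) - Fx * gr * vr| := by
      rw [abs_mul, abs_mul, abs_two]
    rw [habs2]
    apply mul_le_mul_of_nonneg_left _ (by positivity : (0:ℝ) ≤ 2 * |gr|)
    have hinner : S * (P * r) - Fx * gr * vr
        = Fx * gr * (P * r - vr) + (L * (P * r - vr)) * (P * r) + Er * (P * r) := by
      simp only [hSdef]; ring
    rw [hinner]
    have t1 : |Fx * gr * (P * r - vr)| ≤ |Fx| * |gr| * (ε2 * r) := by
      rw [abs_mul, abs_mul]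
      exact mul_le_mul_of_nonneg_left hPrv (by positivity)
    have t2 : |(L * (P * r - vr)) * (P * r)| ≤ |L| * (ε2 * r) * (|P| * r) := by
      rw [abs_mul, abs_mul, hPr]
      apply mul_le_mul_of_nonneg_right _ (by positivity)
      exact mul_le_mul_of_nonneg_left hPrv (abs_nonneg L)
    have t3 : |Er * (P * r)| ≤ |Er| * (|P| * r) := by
      rw [abs_mul, hPr]
    calc |Fx * gr * (P * r - vr) + (L * (P * r - vr)) * (P * r) + Er * (P * r)|
        ≤ |Fx * gr * (P * r - vr) + (L * (P * r - vr)) * (P * r)| + |Er * (P * r)| :=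
          abs_add_le _ _
      _ ≤ |Fx * gr * (P * r - vr)| + |(L * (P * r - vr)) * (P * r)| + |Er * (P * r)| := by
          linarith [abs_add_le (Fx * gr * (P * r - vr)) ((L * (P * r - vr)) * (P * r))]
      _ ≤ N' := by rw [hN'def]; linarith
  have hden : |P| ^ 2 * r ^ 2 / 2 ≤ |vr * (P * r)| := by
    rw [abs_mul, hPr]
    calc |P| ^ 2 * r ^ 2 / 2 = (|P| / 2 * r) * (|P| * r) := by ring
      _ ≤ |vr| * (|P| * r) := mul_le_mul_of_nonneg_right hvl (by positivity)
  have hfrac : |2 * gr * x - 2 * γ0 * gr ^ 2 / r|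
      ≤ (2 * |gr| * N') / (|P| ^ 2 * r ^ 2 / 2) := by
    rw [hkey, abs_div]
    exact div_le_div₀ (by positivity) hNum (by positivity) hden
  have hstep : N' ≤ ((-γ0) * |P| ^ 2 / 4) * (r * |gr|) := by
    have hb2 : |L| * (ε2 * r) * (|P| * r) ≤ (|L| * ε2 * |P| / c) * (r * |gr|) := by
      have hq : c * (r * r) ≤ r * |gr| := by nlinarith
      have h4 := mul_le_mul_of_nonneg_left hq
        (by positivity : (0:ℝ) ≤ |L| * ε2 * |P| / c)
      calc |L| * (ε2 * r) * (|P| * r) = (|L| * ε2 * |P| / c) * (c * (r * r)) := by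
            field_simp
        _ ≤ _ := h4
    have hb3 : |Er| * (|P| * r) ≤ (ε1 * |P| * (1 + (|L| + 1) / c)) * (r * |gr|) := by
      have h6 : (|L| + 1) * r ≤ (|L| + 1) / c * |gr| := by
        have hmul := mul_le_mul_of_nonneg_left hgr
          (by positivity : (0:ℝ) ≤ (|L| + 1) / c)
        calc (|L| + 1) * r = (|L| + 1) / c * (c * r) := by field_simp
          _ ≤ (|L| + 1) / c * |gr| := hmul
      have h5 : |Er| ≤ ε1 * ((1 + (|L| + 1) / c) * |gr|) := by
        calc |Er| ≤ ε1 * (|gr| + (|L| + 1) * r) := hEb2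
          _ ≤ ε1 * ((1 + (|L| + 1) / c) * |gr|) := by
              apply mul_le_mul_of_nonneg_left _ hε1.le; linarith
      calc |Er| * (|P| * r)
          ≤ (ε1 * ((1 + (|L| + 1) / c) * |gr|)) * (|P| * r) :=
            mul_le_mul_of_nonneg_right h5 (by positivity)
        _ = (ε1 * |P| * (1 + (|L| + 1) / c)) * (r * |gr|) := by ring
    have hbr2 : ε2 * |Fx| + |L| * ε2 * |P| / c ≤ (-γ0) * |P| ^ 2 / 8 := by
      have h9 : ε2 * |Fx| + |L| * ε2 * |P| / c = ε2 * (|Fx| + |L| * |P| / c) := by ring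
      have h10 : ε2 * (|Fx| + |L| * |P| / c) ≤ ε2 * (|Fx| + |L| * |P| / c + 1) := by
        apply mul_le_mul_of_nonneg_left _ hε2.le
        linarith
      linarith
    have hbr1 : ε1 * |P| * (1 + (|L| + 1) / c) ≤ (-γ0) * |P| ^ 2 / 8 := by
      have h8 : ε1 * (|P| * (1 + (|L| + 1) / c)) ≤ ε1 * (|P| * (1 + (|L| + 1) / c) + 1) := by
        apply mul_le_mul_of_nonneg_left _ hε1.le
        linarith
      calc ε1 * |P| * (1 + (|L| + 1) / c) = ε1 * (|P| * (1 + (|L| + 1) / c)) := by ring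
        _ ≤ ε1 * (|P| * (1 + (|L| + 1) / c) + 1) := h8
        _ ≤ (-γ0) * |P| ^ 2 / 8 := hK1
    have hb1 : |Fx| * |gr| * (ε2 * r) = (ε2 * |Fx|) * (r * |gr|) := by ring
    calc N' = (ε2 * |Fx|) * (r * |gr|) + |L| * (ε2 * r) * (|P| * r)
          + |Er| * (|P| * r) := by rw [hN'def, hb1]
      _ ≤ (ε2 * |Fx|) * (r * |gr|) + (|L| * ε2 * |P| / c) * (r * |gr|)
          + (ε1 * |P| * (1 + (|L| + 1) / c)) * (r * |gr|) := by linarith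
      _ = (ε2 * |Fx| + |L| * ε2 * |P| / c + ε1 * |P| * (1 + (|L| + 1) / c))
          * (r * |gr|) := by ring
      _ ≤ ((-γ0) * |P| ^ 2 / 4) * (r * |gr|) := by
          apply mul_le_mul_of_nonneg_right _ (by positivity)
          linarith
  have hfinal : (2 * |gr| * N') / (|P| ^ 2 * r ^ 2 / 2) ≤ (-γ0) * (gr ^ 2 / r) := by
    rw [div_le_iff₀ (by positivity)]
    have h8 := mul_le_mul_of_nonneg_left hstep (by positivity : (0:ℝ) ≤ 2 * |gr|)
    calc 2 * |gr| * N' ≤ 2 * |gr| * (((-γ0) * |P| ^ 2 / 4) * (r * |gr|)) := h8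
      _ = (-γ0) * (|gr| ^ 2 * r) * (|P| ^ 2 / 2) := by ring
      _ = (-γ0) * (gr ^ 2 / r) * (|P| ^ 2 * r ^ 2 / 2) := by
          rw [sq_abs]
          field_simp
  have h10 : 2 * gr * x - 2 * γ0 * gr ^ 2 / r ≤ (-γ0) * (gr ^ 2 / r) :=
    le_trans (le_abs_self _) (le_trans hfrac hfinal)
  have h11 : 2 * γ0 * gr ^ 2 / r + (-γ0) * (gr ^ 2 / r) = γ0 * gr ^ 2 / r := by
    ring
  linarith only [h10, h11]

set_option maxHeartbeats 1000000 in
theorem stmt_12 (a : ℝ) (ha : 0 < a)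
    (v v' φ φ' : ℝ → ℝ) (F : ℝ → ℝ → ℝ) (Fx Fr : ℝ)
    -- v ∈ C¹[0,a] with derivative v'
    (hv : ∀ r ∈ Set.Icc (0:ℝ) a, HasDerivWithinAt v (v' r) (Set.Icc 0 a) r)
    (hv'c : ContinuousOn v' (Set.Icc 0 a))
    (hv0 : v 0 = 0) (hv'0 : v' 0 ≠ 0)
    -- F is C¹ on an open set U containing the graph {(φ r, r) : 0 ≤ r ≤ a}
    (U : Set (ℝ × ℝ)) (hU : IsOpen U)
    (hgraph : ∀ r ∈ Set.Icc (0:ℝ) a, (φ r, r) ∈ U)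
    (hF : ContDiffOn ℝ 1 (fun p : ℝ × ℝ => F p.1 p.2) U)
    (hF0 : F (φ 0) 0 = 0)
    -- partial derivatives of F at (φ 0, 0)
    (hFx : HasDerivAt (fun x => F x 0) Fx (φ 0))
    (hFr : HasDerivAt (fun t => F (φ 0) t) Fr 0)
    -- φ ∈ C[0,a] ∩ C¹(0,a] solves v·φ' = F(φ,·)
    (hφc : ContinuousOn φ (Set.Icc 0 a))
    (hφ' : ∀ r ∈ Set.Ioc (0:ℝ) a, HasDerivAt φ (φ' r) r)
    (hφ'c : ContinuousOn φ' (Set.Ioc 0 a))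
    (heq : ∀ r ∈ Set.Ioc (0:ℝ) a, v r * φ' r = F (φ r) r)
    -- γ := Fx / v'(0) < 0
    (hγ : Fx / v' 0 < 0) :
    HasDerivWithinAt φ (Fr / (v' 0 - Fx)) (Set.Ici 0) 0 ∧
    Filter.Tendsto φ' (nhdsWithin 0 (Set.Ioi 0)) (nhds (Fr / (v' 0 - Fx))) := by
  set P : ℝ := v' 0 with hPdef
  have hPne : P ≠ 0 := hv'0
  have habsP : (0:ℝ) < |P| := abs_pos.mpr hPne
  set γ0 : ℝ := Fx / P with hγ0def
  have hγ0 : γ0 < 0 := hγ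
  have hγ0' : (0:ℝ) < -γ0 := neg_pos.mpr hγ0
  have hPFx : P - Fx ≠ 0 := by
    rcases div_neg_iff.mp hγ0 with ⟨h1, h2⟩ | ⟨h1, h2⟩
    · intro h; nlinarith
    · intro h; nlinarith
  set L : ℝ := Fr / (P - Fx) with hLdef
  have hL : Fx * L + Fr = L * P := by
    have h0 : L * (P - Fx) = Fr := div_mul_cancel₀ Fr hPFx
    linarith [h0]
  -- filter inequality
  have hle : nhdsWithin (0:ℝ) (Set.Ioi 0) ≤ nhdsWithin (0:ℝ) (Set.Icc 0 a) :=
    nhdsWithin_le_iff.mpr (mem_of_superset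
      (Ioc_mem_nhdsGT_of_mem ⟨le_refl _, ha⟩) Set.Ioc_subset_Icc_self)
  -- φ tends to φ 0
  have hφ0t : Tendsto φ (nhdsWithin 0 (Set.Ioi 0)) (nhds (φ 0)) :=
    ((hφc 0 ⟨le_refl _, ha.le⟩).tendsto).mono_left hle
  have hpath : Tendsto (fun r => ((φ r, r) : ℝ × ℝ)) (nhdsWithin 0 (Set.Ioi 0))
      (nhds ((φ 0, 0) : ℝ × ℝ)) :=
    hφ0t.prodMk_nhds (tendsto_id.mono_left nhdsWithin_le_nhds)
  -- derivative of F at (φ 0, 0)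
  have hmem0 : ((φ 0, 0) : ℝ × ℝ) ∈ U := hgraph 0 ⟨le_refl _, ha.le⟩
  have hdiff : DifferentiableAt ℝ (fun p : ℝ × ℝ => F p.1 p.2) ((φ 0, 0) : ℝ × ℝ) :=
    (hF.contDiffAt (hU.mem_nhds hmem0)).differentiableAt one_ne_zero
  have hfd := hdiff.hasFDerivAt
  set D := fderiv ℝ (fun p : ℝ × ℝ => F p.1 p.2) ((φ 0, 0) : ℝ × ℝ) with hDdef
  have hDx : D ((1:ℝ), (0:ℝ)) = Fx := by
    have hcurve : HasDerivAt (fun x : ℝ => ((x, (0:ℝ)) : ℝ × ℝ)) ((1:ℝ), (0:ℝ)) (φ 0) :=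
      (hasDerivAt_id _).prodMk (hasDerivAt_const _ _)
    have h2 := hfd.comp_hasDerivAt (φ 0) hcurve
    exact (hFx.unique h2).symm
  have hDr : D ((0:ℝ), (1:ℝ)) = Fr := by
    have hcurve : HasDerivAt (fun t : ℝ => ((φ 0, t) : ℝ × ℝ)) ((0:ℝ), (1:ℝ)) 0 :=
      (hasDerivAt_const _ _).prodMk (hasDerivAt_id _)
    have h2 := hfd.comp_hasDerivAt 0 hcurve
    exact (hFr.unique h2).symm
  have hDap : ∀ p : ℝ × ℝ, D p = Fx * p.1 + Fr * p.2 := by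
    intro p
    have hp : p = p.1 • ((1:ℝ), (0:ℝ)) + p.2 • ((0:ℝ), (1:ℝ)) := by
      simp [Prod.ext_iff]
    conv_lhs => rw [hp]
    rw [map_add, map_smul, map_smul, hDx, hDr]
    simp [smul_eq_mul, mul_comm]
  have hFo : (fun p : ℝ × ℝ => F p.1 p.2 - (Fx * (p.1 - φ 0) + Fr * p.2))
      =o[nhds ((φ 0, 0) : ℝ × ℝ)] (fun p => p - ((φ 0, 0) : ℝ × ℝ)) := by
    have h := hfd.isLittleO
    have he : (fun p : ℝ × ℝ => F p.1 p.2 - (Fx * (p.1 - φ 0) + Fr * p.2))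
        = (fun p : ℝ × ℝ => F p.1 p.2 - F (φ 0) 0 - D (p - ((φ 0, 0) : ℝ × ℝ))) := by
      funext p
      rw [hDap]
      simp only [Prod.fst_sub, Prod.snd_sub, hF0, sub_zero]
    rw [he]
    exact h
  set E : ℝ → ℝ := fun r => F (φ r) r - (Fx * (φ r - φ 0) + Fr * r) with hEdef
  have hEo : E =o[nhdsWithin 0 (Set.Ioi 0)]
      (fun r => ((φ r, r) : ℝ × ℝ) - ((φ 0, 0) : ℝ × ℝ)) :=
    hFo.comp_tendsto hpath
  -- v little-o
  have hvo : (fun r => v r - P * r) =o[nhdsWithin 0 (Set.Ioi 0)] (fun r : ℝ => r) := by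
    have h := ((hv 0 ⟨le_refl _, ha.le⟩).hasFDerivWithinAt.isLittleO).mono hle
    simp only [hv0, sub_zero, smul_eq_mul, one_mul,
      ContinuousLinearMap.smulRight_apply, ContinuousLinearMap.one_apply] at h
    have he : (fun r => v r - P * r) = (fun r => v r - r * P) := by
      funext r; ring
    rw [he]
    exact h
  -- eventual epsilon bounds
  set g : ℝ → ℝ := fun r => φ r - φ 0 - L * r with hgdef
  have hEb : ∀ ε : ℝ, 0 < ε → ∀ᶠ r in nhdsWithin 0 (Set.Ioi 0),
      |E r| ≤ ε * (|φ r - φ 0| + r) := by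
    intro ε hε
    filter_upwards [Asymptotics.isLittleO_iff.mp hEo hε, self_mem_nhdsWithin] with r h1 h2
    have hrpos : (0:ℝ) < r := h2
    have h3 : ‖((φ r, r) : ℝ × ℝ) - ((φ 0, 0) : ℝ × ℝ)‖ ≤ |φ r - φ 0| + r := by
      rw [Prod.norm_def]
      apply max_le
      · simp only [Prod.fst_sub, Real.norm_eq_abs]
        linarith
      · simp only [Prod.snd_sub, Real.norm_eq_abs, sub_zero, abs_of_pos hrpos]
        exact le_add_of_nonneg_left (abs_nonneg _)
    calc |E r| = ‖E r‖ := (Real.norm_eq_abs _).symm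
      _ ≤ ε * ‖((φ r, r) : ℝ × ℝ) - ((φ 0, 0) : ℝ × ℝ)‖ := h1
      _ ≤ ε * (|φ r - φ 0| + r) := mul_le_mul_of_nonneg_left h3 hε.le
  have hvb : ∀ ε : ℝ, 0 < ε → ∀ᶠ r in nhdsWithin 0 (Set.Ioi 0),
      |v r - P * r| ≤ ε * r := by
    intro ε hε
    filter_upwards [Asymptotics.isLittleO_iff.mp hvo hε, self_mem_nhdsWithin] with r h1 h2
    have hrpos : (0:ℝ) < r := h2
    rw [Real.norm_eq_abs, Real.norm_eq_abs, abs_of_pos hrpos] at h1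
    exact h1
  have hvlow : ∀ᶠ r in nhdsWithin 0 (Set.Ioi 0), |P| / 2 * r ≤ |v r| ∧ v r ≠ 0 := by
    filter_upwards [hvb (|P| / 2) (by positivity), self_mem_nhdsWithin] with r h1 h2
    have hrpos : (0:ℝ) < r := h2
    have h3 : |P * r| - |v r| ≤ |v r - P * r| := by
      rw [abs_sub_comm]
      exact abs_sub_abs_le_abs_sub (P * r) (v r)
    have h4 : |P * r| = |P| * r := by rw [abs_mul, abs_of_pos hrpos]
    have h5 : |P| / 2 * r ≤ |v r| := by linarith
    refine ⟨h5, ?_⟩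
    intro h
    rw [h, abs_zero] at h5
    have h6 : (0:ℝ) < |P| / 2 * r := mul_pos (by positivity) hrpos
    linarith
  have hIoa : ∀ᶠ r in nhdsWithin 0 (Set.Ioi 0), r ∈ Set.Ioc (0:ℝ) a :=
    Ioc_mem_nhdsGT_of_mem ⟨le_refl _, ha⟩
  -- the structural identity
  have hSgen : ∀ r ∈ Set.Ioc (0:ℝ) a,
      v r * (φ' r - L) = Fx * g r + L * (P * r - v r) + E r := by
    intro r hra
    have h1 := heq r hra
    simp only [hEdef, hgdef]
    linear_combination h1 + r * hL
  -- MAIN ESTIMATE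
  have main : ∀ c : ℝ, 0 < c → ∀ᶠ r in nhdsWithin 0 (Set.Ioi 0), |g r| ≤ c * r := by
    intro c hc
    set K2 : ℝ := |Fx| + |L| * |P| / c + 1 with hK2def
    set K1 : ℝ := |P| * (1 + (|L| + 1) / c) + 1 with hK1def
    have hK2pos : (0:ℝ) < K2 := by positivity
    have hK1pos : (0:ℝ) < K1 := by positivity
    set ε1 : ℝ := (-γ0) * |P| ^ 2 / (8 * K1) with hε1def
    set ε2 : ℝ := min (|P| / 2) ((-γ0) * |P| ^ 2 / (8 * K2)) with hε2def
    have hε1 : (0:ℝ) < ε1 := by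
      apply div_pos (mul_pos hγ0' (pow_pos habsP 2)) (by positivity)
    have hε2 : (0:ℝ) < ε2 := lt_min (by positivity)
      (div_pos (mul_pos hγ0' (pow_pos habsP 2)) (by positivity))
    have hev : ∀ᶠ r in nhdsWithin 0 (Set.Ioi 0),
        (|E r| ≤ ε1 * (|φ r - φ 0| + r) ∧ |v r - P * r| ≤ ε2 * r) ∧
        ((|P| / 2 * r ≤ |v r| ∧ v r ≠ 0) ∧ r ∈ Set.Ioc 0 a) :=
      ((hEb ε1 hε1).and (hvb ε2 hε2)).and (hvlow.and hIoa)
    obtain ⟨r1, hr1pos, hr1sub⟩ := mem_nhdsGT_iff_exists_Ioc_subset.mp hev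
    -- derivative of w = g^2
    have hgd : ∀ r ∈ Set.Ioc (0:ℝ) a, HasDerivAt g (φ' r - L) r := by
      intro r hra
      have h1 : HasDerivAt (fun x : ℝ => φ 0 + L * x) L r := by
        simpa using ((hasDerivAt_id r).const_mul L).const_add (φ 0)
      have h2 := (hφ' r hra).sub h1
      have he : (fun x => φ x - (φ 0 + L * x)) = g := by
        funext x; simp only [hgdef]; ring
      rw [← he]; exact h2
    have hwd : ∀ r ∈ Set.Ioc (0:ℝ) r1, HasDerivAt (fun r => (g r) ^ 2)
        (2 * g r * (φ' r - L)) r := by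
      intro r hr
      have hra : r ∈ Set.Ioc (0:ℝ) a := ((hr1sub hr).2).2
      have h1 := (hgd r hra).fun_pow 2
      refine h1.congr_deriv ?_
      simp
    -- limit of w
    have hg0 : Tendsto g (nhdsWithin 0 (Set.Ioi 0)) (nhds 0) := by
      have h1 := hφ0t.sub (tendsto_const_nhds (x := φ 0))
      have h2 : Tendsto (fun r : ℝ => L * r) (nhdsWithin 0 (Set.Ioi 0)) (nhds 0) := by
        have h3 := (tendsto_id.mono_left
          (nhdsWithin_le_nhds : nhdsWithin (0:ℝ) (Set.Ioi 0) ≤ nhds 0)).const_mul L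
        simpa using h3
      have h4 := h1.sub h2
      simpa [hgdef] using h4
    have hlim2 : Tendsto (fun r => (g r) ^ 2) (nhdsWithin 0 (Set.Ioi 0)) (nhds 0) := by
      have := hg0.pow 2
      simpa using this
    -- the region estimate
    have hK1c : ε1 * (|P| * (1 + (|L| + 1) / c) + 1) ≤ (-γ0) * |P| ^ 2 / 8 := by
      have h7 : ε1 * K1 = (-γ0) * |P| ^ 2 / 8 := by
        rw [hε1def]; field_simp
      rw [hK1def] at h7
      linarith [h7]
    have hK2c : ε2 * (|Fx| + |L| * |P| / c + 1) ≤ (-γ0) * |P| ^ 2 / 8 := by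
      have h7 : ε2 ≤ (-γ0) * |P| ^ 2 / (8 * K2) := min_le_right _ _
      have h8 : ε2 * K2 ≤ ((-γ0) * |P| ^ 2 / (8 * K2)) * K2 :=
        mul_le_mul_of_nonneg_right h7 hK2pos.le
      have h9 : ((-γ0) * |P| ^ 2 / (8 * K2)) * K2 = (-γ0) * |P| ^ 2 / 8 := by
        field_simp
      rw [hK2def] at h8
      linarith [h8, h9]
    have hreg : ∀ r ∈ Set.Ioc (0:ℝ) r1, c ^ 2 * r ^ 2 ≤ (g r) ^ 2 →
        2 * g r * (φ' r - L) ≤ γ0 * (g r) ^ 2 / r := by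
      intro r hr hwr
      obtain ⟨⟨hE1, hv2⟩, ⟨hvl, hvne⟩, hra⟩ := hr1sub hr
      have hrpos : (0:ℝ) < r := hr.1
      have hgr : c * r ≤ |g r| := by
        have h2 : (c * r) ^ 2 ≤ (g r) ^ 2 := by
          calc (c * r) ^ 2 = c ^ 2 * r ^ 2 := by ring
            _ ≤ (g r) ^ 2 := hwr
        have h3 := sq_le_sq.mp h2
        rwa [abs_of_pos (mul_pos hc hrpos)] at h3
      have hE1' : |E r| ≤ ε1 * (|g r + L * r| + r) := by
        have h4 : φ r - φ 0 = g r + L * r := by simp only [hgdef]; ring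
        rwa [h4] at hE1
      exact region_est P Fx L γ0 c ε1 ε2 r (g r) (E r) (v r) (φ' r - L)
        hγ0def hγ0 habsP hc hrpos hε1 hε2 hK1c hK2c hE1' hv2 hvl hvne (hSgen r hra) hgr
    -- apply core
    have key := core γ0 c r1 hγ0 hc hr1pos (fun r => (g r) ^ 2)
      (fun r => 2 * g r * (φ' r - L)) (fun r _ => sq_nonneg _) hwd hlim2 hreg
    filter_upwards [Ioc_mem_nhdsGT_of_mem ⟨le_refl (0:ℝ), hr1pos⟩] with r hr
    have h := key r hr
    have hrpos : (0:ℝ) < r := hr.1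
    have h2 : (g r) ^ 2 ≤ (c * r) ^ 2 := by
      calc (g r) ^ 2 ≤ c ^ 2 * r ^ 2 := h
        _ = (c * r) ^ 2 := by ring
    exact abs_le_of_sq_le_sq h2 (mul_pos hc hrpos).le
  -- g = o(r)
  have hgo : g =o[nhdsWithin 0 (Set.Ioi 0)] (fun r : ℝ => r) := by
    rw [Asymptotics.isLittleO_iff]
    intro c hc
    filter_upwards [main c hc, self_mem_nhdsWithin] with r h1 h2
    rw [Real.norm_eq_abs, Real.norm_eq_abs, abs_of_pos (show (0:ℝ) < r from h2)]
    exact h1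
  have hT1 : Tendsto (fun r => g r / r) (nhdsWithin 0 (Set.Ioi 0)) (nhds 0) :=
    hgo.tendsto_div_nhds_zero
  constructor
  · -- derivative within Ici 0
    rw [hasDerivWithinAt_iff_tendsto_slope]
    have hset : Set.Ici (0:ℝ) \ {0} = Set.Ioi 0 := by
      ext x
      simp only [Set.mem_diff, Set.mem_Ici, Set.mem_singleton_iff, Set.mem_Ioi]
      constructor
      · rintro ⟨h1, h2⟩; exact lt_of_le_of_ne h1 (Ne.symm h2)
      · intro h; exact ⟨h.le, h.ne'⟩
    rw [hset]
    have h1 : Tendsto (fun r => g r / r + L) (nhdsWithin 0 (Set.Ioi 0)) (nhds L) := by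
      simpa using hT1.add_const L
    apply h1.congr'
    filter_upwards [self_mem_nhdsWithin] with r hr
    have hrpos : (0:ℝ) < r := hr
    rw [slope_def_field]
    simp only [hgdef, sub_zero]
    field_simp
    ring
  · -- limit of φ'
    have hbig : (fun r => ((φ r, r) : ℝ × ℝ) - ((φ 0, 0) : ℝ × ℝ))
        =O[nhdsWithin 0 (Set.Ioi 0)] (fun r : ℝ => r) := by
      rw [Asymptotics.isBigO_iff]
      refine ⟨|L| + 2, ?_⟩
      filter_upwards [main 1 one_pos, self_mem_nhdsWithin] with r h1 h2
      have hrpos : (0:ℝ) < r := h2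
      rw [Prod.norm_def]
      have hg1 : |g r| ≤ r := by simpa using h1
      apply max_le
      · simp only [Prod.fst_sub, Real.norm_eq_abs]
        have h3 : φ r - φ 0 = g r + L * r := by simp only [hgdef]; ring
        rw [h3, abs_of_pos hrpos]
        calc |g r + L * r| ≤ |g r| + |L * r| := abs_add_le _ _
          _ ≤ r + |L| * r := by rw [abs_mul, abs_of_pos hrpos]; linarith
          _ ≤ (|L| + 2) * r := by nlinarith
      · simp only [Prod.snd_sub, Real.norm_eq_abs, sub_zero, abs_of_pos hrpos]
        nlinarith [abs_nonneg L]
    have hEid : E =o[nhdsWithin 0 (Set.Ioi 0)] (fun r : ℝ => r) := hEo.trans_isBigO hbig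
    have hT3 : Tendsto (fun r => E r / r) (nhdsWithin 0 (Set.Ioi 0)) (nhds 0) :=
      hEid.tendsto_div_nhds_zero
    have hT2 : Tendsto (fun r => (v r - P * r) / r) (nhdsWithin 0 (Set.Ioi 0)) (nhds 0) :=
      hvo.tendsto_div_nhds_zero
    set bnd : ℝ → ℝ := fun r => (2 / |P|) * (|Fx| * |g r / r| + |L| * |(v r - P * r) / r|
      + |E r / r|) with hbnddef
    have hbnd0 : Tendsto bnd (nhdsWithin 0 (Set.Ioi 0)) (nhds 0) := by
      have h1 := (((hT1.abs.const_mul |Fx|).add (hT2.abs.const_mul |L|)).add hT3.abs).const_mul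
        (2 / |P|)
      simpa using h1
    have hevb : ∀ᶠ r in nhdsWithin 0 (Set.Ioi 0), ‖φ' r - L‖ ≤ bnd r := by
      filter_upwards [hvlow, hIoa, self_mem_nhdsWithin] with r hvlr hra hrpos'
      obtain ⟨hvl, hvne⟩ := hvlr
      have hrpos : (0:ℝ) < r := hrpos'
      have h1 : φ' r - L = (Fx * g r + L * (P * r - v r) + E r) / v r := by
        rw [eq_div_iff hvne]
        linear_combination hSgen r hra
      rw [Real.norm_eq_abs, h1, abs_div]
      have hnum : |Fx * g r + L * (P * r - v r) + E r|
          ≤ |Fx| * |g r| + |L| * |v r - P * r| + |E r| := by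
        calc |Fx * g r + L * (P * r - v r) + E r|
            ≤ |Fx * g r + L * (P * r - v r)| + |E r| := abs_add_le _ _
          _ ≤ |Fx * g r| + |L * (P * r - v r)| + |E r| := by
              linarith [abs_add_le (Fx * g r) (L * (P * r - v r))]
          _ = |Fx| * |g r| + |L| * |P * r - v r| + |E r| := by rw [abs_mul, abs_mul]
          _ = |Fx| * |g r| + |L| * |v r - P * r| + |E r| := by rw [abs_sub_comm (P * r)]
      calc |Fx * g r + L * (P * r - v r) + E r| / |v r|
          ≤ (|Fx| * |g r| + |L| * |v r - P * r| + |E r|) / (|P| / 2 * r) :=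
            div_le_div₀ (by positivity) hnum (by positivity) hvl
        _ = bnd r := by
            simp only [hbnddef, abs_div, abs_of_pos hrpos]
            field_simp
    have h2 : Tendsto (fun r => φ' r - L) (nhdsWithin 0 (Set.Ioi 0)) (nhds 0) :=
      squeeze_zero_norm' hevb hbnd0
    have h3 := h2.add_const L
    simpa using h3
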